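/- Let q : ℤ⁶ → ℤ × (ℤ/2ℤ) × (ℤ/2ℤ) be the additive group homomorphism sending the standard basis vectors e₁,…,e₆ to (8,0,0), (4,0,0), (2,1,0), (2,1,1), (2,0,1), (1,0,0) respectively. Then q is surjective, and the kernel of q equals the subgroup of ℤ⁶ generated by the five vectors g₁ = (−2,0,3,3,3,−2), g₂ = (1,−2,0,0,0,0), g₃ = (−1,3,−2,0,0,0), g₄ = (−1,3,0,−2,0,0), g₅ = (−1,3,0,0,−2,0). -/
import Mathlib


/-- Coordinate vectors of the generators of the Tambara ideal `𝔞(Q₈/Q₈)` in the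
basis `[Q₈/e], [Q₈/C₂], [Q₈/I], [Q₈/J], [Q₈/K], [Q₈/Q₈]` of `A(Q₈) ≅ ℤ⁶`. -/
def g1 : Fin 6 → ℤ := ![-2, 0, 3, 3, 3, -2]
def g2 : Fin 6 → ℤ := ![1, -2, 0, 0, 0, 0]
def g3 : Fin 6 → ℤ := ![-1, 3, -2, 0, 0, 0]
def g4 : Fin 6 → ℤ := ![-1, 3, 0, -2, 0, 0]
def g5 : Fin 6 → ℤ := ![-1, 3, 0, 0, -2, 0]

private def qdef : (Fin 6 → ℤ) →+ ℤ × ZMod 2 × ZMod 2 where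
  toFun x := (8*x 0+4*x 1+2*x 2+2*x 3+2*x 4+x 5,
    ((x 2 + x 3 : ℤ) : ZMod 2), ((x 3 + x 4 : ℤ) : ZMod 2))
  map_zero' := by simp
  map_add' a b := by
    refine Prod.ext ?_ (Prod.ext ?_ ?_) <;> simp [Pi.add_apply] <;> push_cast <;> ring

private lemma decomp (x : Fin 6 → ℤ) :
    x = x 0 • Pi.single 0 1 + x 1 • Pi.single 1 1 + x 2 • Pi.single 2 1
      + x 3 • Pi.single 3 1 + x 4 • Pi.single 4 1 + x 5 • Pi.single 5 1 := by
  funext i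
  fin_cases i <;> simp [Pi.single_apply]

private lemma val5 : ∀ a b c d e f : ℤ, ![a,b,c,d,e,f] (5 : Fin 6) = f :=
  fun _ _ _ _ _ _ => rfl

private lemma qval (q : (Fin 6 → ℤ) →+ ℤ × ZMod 2 × ZMod 2)
    (h0 : q (Pi.single 0 1) = (8, 0, 0)) (h1 : q (Pi.single 1 1) = (4, 0, 0))
    (h2 : q (Pi.single 2 1) = (2, 1, 0)) (h3 : q (Pi.single 3 1) = (2, 1, 1))
    (h4 : q (Pi.single 4 1) = (2, 0, 1)) (h5 : q (Pi.single 5 1) = (1, 0, 0))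
    (x : Fin 6 → ℤ) :
    q x = (8*x 0+4*x 1+2*x 2+2*x 3+2*x 4+x 5,
      ((x 2 + x 3 : ℤ) : ZMod 2), ((x 3 + x 4 : ℤ) : ZMod 2)) := by
  conv_lhs => rw [decomp x]
  simp only [map_add, map_zsmul, h0, h1, h2, h3, h4, h5]
  refine Prod.ext ?_ (Prod.ext ?_ ?_) <;>
    simp [Prod.smul_def, zsmul_eq_mul] <;> push_cast <;> ring

theorem stmt1 :
    (∃ q : (Fin 6 → ℤ) →+ ℤ × ZMod 2 × ZMod 2,
      q (Pi.single 0 1) = (8, 0, 0) ∧ q (Pi.single 1 1) = (4, 0, 0) ∧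
      q (Pi.single 2 1) = (2, 1, 0) ∧ q (Pi.single 3 1) = (2, 1, 1) ∧
      q (Pi.single 4 1) = (2, 0, 1) ∧ q (Pi.single 5 1) = (1, 0, 0)) ∧
    (∀ q : (Fin 6 → ℤ) →+ ℤ × ZMod 2 × ZMod 2,
      (q (Pi.single 0 1) = (8, 0, 0) ∧ q (Pi.single 1 1) = (4, 0, 0) ∧
       q (Pi.single 2 1) = (2, 1, 0) ∧ q (Pi.single 3 1) = (2, 1, 1) ∧
       q (Pi.single 4 1) = (2, 0, 1) ∧ q (Pi.single 5 1) = (1, 0, 0)) →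
      Function.Surjective q ∧
      q.ker = AddSubgroup.closure {g1, g2, g3, g4, g5}) := by
  constructor
  · exact ⟨qdef, by simp [qdef, Pi.single_apply], by simp [qdef, Pi.single_apply],
      by simp [qdef, Pi.single_apply], by simp [qdef, Pi.single_apply],
      by simp [qdef, Pi.single_apply], by simp [qdef, Pi.single_apply]⟩
  · rintro q ⟨h0, h1, h2, h3, h4, h5⟩
    have key := qval q h0 h1 h2 h3 h4 h5
    constructor
    · rintro ⟨a, b, c⟩
      obtain ⟨b', hb⟩ := ZMod.intCast_surjective (n := 2) b
      obtain ⟨c', hc⟩ := ZMod.intCast_surjective (n := 2) c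
      refine ⟨![0, 0, b', 0, c', a - 2*b' - 2*c'], ?_⟩
      rw [key]
      refine Prod.ext ?_ (Prod.ext ?_ ?_) <;>
        simp [← hb, ← hc, val5] <;> ring
    · apply le_antisymm
      · intro x hx
        rw [AddMonoidHom.mem_ker, key] at hx
        rw [show ((0 : ℤ × ZMod 2 × ZMod 2)) = (0, 0, 0) from rfl, Prod.mk.injEq,
          Prod.mk.injEq] at hx
        obtain ⟨e1, e2, e3⟩ := hx
        rw [ZMod.intCast_zmod_eq_zero_iff_dvd] at e2 e3
        obtain ⟨k, hk⟩ := e2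
        obtain ⟨l, hl⟩ := e3
        have hxeq : x = (4*x 0+2*x 1+x 2+x 3+x 4) • g1
            + (27*x 0+13*x 1+6*x 2+6*x 3+6*x 4) • g2
            + (6*x 0+3*x 1+x 2+3*l) • g3
            + (6*x 0+3*x 1+3*k+3*l-2*x 3) • g4
            + (6*x 0+3*x 1+3*k+x 4) • g5 := by
          funext i
          fin_cases i <;>
            simp only [Pi.add_apply, Pi.smul_apply, smul_eq_mul] <;>
            simp [g1, g2, g3, g4, g5, val5] <;> omega
        rw [hxeq]
        have m : ∀ g ∈ ({g1, g2, g3, g4, g5} : Set (Fin 6 → ℤ)),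
            g ∈ AddSubgroup.closure {g1, g2, g3, g4, g5} :=
          fun g hg => AddSubgroup.subset_closure hg
        refine AddSubgroup.add_mem _ (AddSubgroup.add_mem _ (AddSubgroup.add_mem _
          (AddSubgroup.add_mem _ ?_ ?_) ?_) ?_) ?_ <;>
          exact AddSubgroup.zsmul_mem _ (m _ (by simp)) _
      · rw [AddSubgroup.closure_le]
        rintro g (rfl | rfl | rfl | rfl | rfl) <;>
          · show _ ∈ q.ker
            rw [AddMonoidHom.mem_ker, key]
            refine Prod.ext ?_ (Prod.ext ?_ ?_) <;>
              simp [g1, g2, g3, g4, g5, val5] <;> decide
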